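/- For every integer m ≥ 4 and every odd integer r ≥ 3, ∑_{d=1}^{r} (μ(d)/d^m) {r/d} ≤ −1/2^{m+1} + ζ(m) − 1 − 1/2^m, and this upper bound is negative (equivalently, ζ(m) − 1 − 1/2^m < 1/2^{m+1} for all m ≥ 4). -/

import Mathlib

set_option maxHeartbeats 1000000

open Finset ArithmeticFunction

theorem moebius_fract_sum_neg_of_odd (m : ℕ) (hm : 4 ≤ m) (r : ℕ) (hr : 3 ≤ r) (hodd : Odd r) :
    (∑ d ∈ Finset.Icc 1 r,
        (ArithmeticFunction.moebius d : ℝ) / (d : ℝ) ^ m * Int.fract ((r : ℝ) / d)) ≤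
      -1 / 2 ^ (m + 1) + (riemannZeta m).re - 1 - 1 / 2 ^ m ∧
    (riemannZeta m).re - 1 - 1 / 2 ^ m < 1 / 2 ^ (m + 1) := by
  have hm1 : (1:ℕ) < m := by omega
  set f : ℕ → ℝ := fun n => 1 / (n:ℝ) ^ m with hf
  have hsum : Summable f := Real.summable_one_div_nat_pow.mpr hm1
  have htail : Summable (fun n => f (n + 3)) := (summable_nat_add_iff 3).mpr hsum
  -- zeta real part
  have hzeta : (riemannZeta m).re = ∑' n : ℕ, f n := by
    rw [zeta_nat_eq_tsum_of_gt_one hm1]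
    have heq : (fun n : ℕ => 1 / (n:ℂ) ^ m) = fun n : ℕ => ((f n : ℝ) : ℂ) := by
      funext n; simp only [hf]; push_cast; ring
    rw [heq, Complex.re_tsum (Complex.summable_ofReal.mpr hsum)]
    simp
  -- tail identity
  have hsplit : ∑ i ∈ range 3, f i + ∑' n : ℕ, f (n + 3) = ∑' n : ℕ, f n :=
    hsum.sum_add_tsum_nat_add 3
  have hrange3 : ∑ i ∈ range 3, f i = 1 + 1 / 2 ^ m := by
    have h0 : (0:ℝ) ^ m = 0 := zero_pow (by omega)
    simp [hf, Finset.sum_range_succ, h0]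
  have hT : (riemannZeta m).re - 1 - 1 / 2 ^ m = ∑' n : ℕ, f (n + 3) := by
    rw [hzeta, ← hsplit, hrange3]; ring
  -- tail for exponent 4
  have hsum4 : Summable (fun n : ℕ => 1 / (n:ℝ) ^ 4) := hasSum_zeta_four.summable
  have htail4 : Summable (fun n : ℕ => 1 / ((n + 3 : ℕ):ℝ) ^ 4) :=
    (summable_nat_add_iff 3).mpr hsum4
  have hsplit4 : ∑ i ∈ range 3, 1 / ((i:ℝ)) ^ 4 + ∑' n : ℕ, 1 / ((n + 3 : ℕ):ℝ) ^ 4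
      = Real.pi ^ 4 / 90 := by
    rw [hsum4.sum_add_tsum_nat_add 3, hasSum_zeta_four.tsum_eq]
  have hT4 : ∑' n : ℕ, 1 / ((n + 3 : ℕ):ℝ) ^ 4 = Real.pi ^ 4 / 90 - 1 - 1 / 16 := by
    have : ∑ i ∈ range 3, 1 / ((i:ℝ)) ^ 4 = 1 + 1/16 := by norm_num [Finset.sum_range_succ]
    rw [← hsplit4, this]; ring
  have hpi1 : Real.pi < 3.141593 := Real.pi_lt_d6
  have hpi2 : 3.141592 < Real.pi := Real.pi_gt_d6
  -- numeric bound on the 4-tail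
  have hpisq : Real.pi ^ 2 < 9.8697 := by nlinarith [Real.pi_pos]
  have hpisq' : 9.8696 < Real.pi ^ 2 := by nlinarith [Real.pi_pos]
  have hp4 : Real.pi ^ 4 < 97.42 := by nlinarith [Real.pi_pos, hpisq, sq_nonneg Real.pi]
  have hp4' : 97.40 < Real.pi ^ 4 := by nlinarith [Real.pi_pos, hpisq', sq_nonneg Real.pi]
  have hc : Real.pi ^ 4 / 90 - 1 - 1 / 16 < 1 / 32 := by linarith
  have hc0 : (0:ℝ) ≤ Real.pi ^ 4 / 90 - 1 - 1 / 16 := by linarith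
  -- termwise comparison of tails
  have hterm : ∀ n : ℕ, f (n + 3) ≤ (1/3:ℝ) ^ (m - 4) * (1 / ((n + 3 : ℕ):ℝ) ^ 4) := by
    intro n
    have hx : (3:ℝ) ≤ ((n + 3 : ℕ):ℝ) := by push_cast; linarith [Nat.cast_nonneg (α := ℝ) n]
    have hx0 : (0:ℝ) < ((n + 3 : ℕ):ℝ) := by linarith
    have key : (3:ℝ) ^ (m - 4) * ((n + 3 : ℕ):ℝ) ^ 4 ≤ ((n + 3 : ℕ):ℝ) ^ m := by
      calc (3:ℝ) ^ (m - 4) * ((n + 3 : ℕ):ℝ) ^ 4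
          ≤ ((n + 3 : ℕ):ℝ) ^ (m - 4) * ((n + 3 : ℕ):ℝ) ^ 4 := by
            gcongr
        _ = ((n + 3 : ℕ):ℝ) ^ m := by rw [← pow_add]; congr 1; omega
    have h1 : f (n + 3) = 1 / ((n + 3 : ℕ):ℝ) ^ m := rfl
    rw [h1, div_pow, one_pow, div_mul_div_comm, one_mul]
    exact one_div_le_one_div_of_le (by positivity) key
  have htail_le : ∑' n : ℕ, f (n + 3)
      ≤ (1/3:ℝ) ^ (m - 4) * (Real.pi ^ 4 / 90 - 1 - 1 / 16) := by
    calc ∑' n : ℕ, f (n + 3)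
        ≤ ∑' n : ℕ, (1/3:ℝ) ^ (m - 4) * (1 / ((n + 3 : ℕ):ℝ) ^ 4) :=
          Summable.tsum_le_tsum hterm htail (htail4.mul_left _)
      _ = (1/3:ℝ) ^ (m - 4) * ∑' n : ℕ, 1 / ((n + 3 : ℕ):ℝ) ^ 4 := tsum_mul_left
      _ = _ := by rw [hT4]
  -- part 2
  have part2 : (riemannZeta m).re - 1 - 1 / 2 ^ m < 1 / 2 ^ (m + 1) := by
    rw [hT]
    have h13 : (1/3:ℝ) ^ (m - 4) ≤ (1/2:ℝ) ^ (m - 4) := by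
      apply pow_le_pow_left₀ (by norm_num) (by norm_num)
    have hhalf : (0:ℝ) < (1/2:ℝ) ^ (m - 4) := by positivity
    have h2 : (1:ℝ) / 2 ^ (m + 1) = (1/2:ℝ) ^ (m - 4) * (1/32) := by
      rw [one_div, ← inv_pow, show m + 1 = (m - 4) + 5 by omega, pow_add]
      norm_num
    calc ∑' n : ℕ, f (n + 3)
        ≤ (1/3:ℝ) ^ (m - 4) * (Real.pi ^ 4 / 90 - 1 - 1 / 16) := htail_le
      _ ≤ (1/2:ℝ) ^ (m - 4) * (Real.pi ^ 4 / 90 - 1 - 1 / 16) := by gcongr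
      _ < (1/2:ℝ) ^ (m - 4) * (1/32) := by gcongr
      _ = 1 / 2 ^ (m + 1) := h2.symm
  refine ⟨?_, part2⟩
  -- part 1
  have hIcc : Finset.Icc 1 r = insert 1 (insert 2 (Finset.Icc 3 r)) := by
    ext x; simp only [Finset.mem_Icc, Finset.mem_insert]; omega
  have h1notin : (1:ℕ) ∉ insert 2 (Finset.Icc 3 r) := by simp
  have h2notin : (2:ℕ) ∉ Finset.Icc 3 r := by simp
  rw [hIcc, Finset.sum_insert h1notin, Finset.sum_insert h2notin]
  -- d = 1 term
  have hd1 : (ArithmeticFunction.moebius 1 : ℝ) / (1:ℝ) ^ m * Int.fract ((r:ℝ) / 1) = 0 := by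
    simp [Int.fract_natCast]
  -- d = 2 term
  obtain ⟨k, hk⟩ := hodd
  have hfrac2 : Int.fract ((r:ℝ) / 2) = 1 / 2 := by
    have : (r:ℝ) / 2 = (k:ℤ) + 1/2 := by
      push_cast [hk]; ring
    rw [this, Int.fract_intCast_add, Int.fract_eq_self.mpr (by norm_num)]
  have hd2 : (ArithmeticFunction.moebius 2 : ℝ) / (2:ℝ) ^ m * Int.fract ((r:ℝ) / 2)
      = -1 / 2 ^ (m + 1) := by
    rw [ArithmeticFunction.moebius_apply_prime Nat.prime_two, hfrac2, pow_succ]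
    push_cast; ring
  have e1 : ((1:ℕ):ℝ) = 1 := by norm_num
  have e2 : ((2:ℕ):ℝ) = 2 := by norm_num
  rw [e1, e2, hd1, hd2]
  -- remaining sum bound
  have hrest : ∑ d ∈ Finset.Icc 3 r,
      (ArithmeticFunction.moebius d : ℝ) / (d:ℝ) ^ m * Int.fract ((r:ℝ) / d)
      ≤ ∑' n : ℕ, f (n + 3) := by
    have step1 : ∑ d ∈ Finset.Icc 3 r,
        (ArithmeticFunction.moebius d : ℝ) / (d:ℝ) ^ m * Int.fract ((r:ℝ) / d)
        ≤ ∑ d ∈ Finset.Icc 3 r, f d := by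
      apply Finset.sum_le_sum
      intro d hd
      have hd3 : 3 ≤ d := (Finset.mem_Icc.mp hd).1
      have hd0 : (0:ℝ) < (d:ℝ) ^ m := by positivity
      have hmu : (ArithmeticFunction.moebius d : ℝ) ≤ 1 := by
        by_cases hsq : Squarefree d
        · rw [ArithmeticFunction.moebius_apply_of_squarefree hsq]
          push_cast
          rcases Nat.even_or_odd (ArithmeticFunction.cardFactors d) with h | h
          · rw [h.neg_one_pow]
          · rw [h.neg_one_pow]; norm_num
        · rw [ArithmeticFunction.moebius_eq_zero_of_not_squarefree hsq]; norm_num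
      have hfr0 : 0 ≤ Int.fract ((r:ℝ) / d) := Int.fract_nonneg _
      have hfr1 : Int.fract ((r:ℝ) / d) ≤ 1 := le_of_lt (Int.fract_lt_one _)
      calc (ArithmeticFunction.moebius d : ℝ) / (d:ℝ) ^ m * Int.fract ((r:ℝ) / d)
          ≤ 1 / (d:ℝ) ^ m * Int.fract ((r:ℝ) / d) := by
            apply mul_le_mul_of_nonneg_right _ hfr0
            exact div_le_div_of_nonneg_right hmu hd0.le |>.trans_eq rfl
        _ ≤ 1 / (d:ℝ) ^ m * 1 := by
            apply mul_le_mul_of_nonneg_left hfr1 (by positivity)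
        _ = f d := by rw [mul_one]
    have step2 : ∑ d ∈ Finset.Icc 3 r, f d ≤ ∑' n : ℕ, f (n + 3) := by
      have : ∑ d ∈ Finset.Icc 3 r, f d = ∑ i ∈ range (r + 1 - 3), f (3 + i) := by
        rw [← Finset.Ico_add_one_right_eq_Icc, Finset.sum_Ico_eq_sum_range]
      rw [this]
      have := Summable.sum_le_tsum (f := fun n => f (n + 3)) (range (r + 1 - 3))
        (fun i _ => by positivity) htail
      convert this using 2 with i
      · rfl
      · rw [add_comm]
    exact step1.trans step2
  linarith [hrest, hT]
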